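/- arXiv:2102.00963 — 2 statements merged into one kernel-verified Lean document; each statement's English description precedes it below -/
import Mathlib

section
/- Fix an integer d ≥ 3 and z ∈ ℂ⁺. Let 𝒢 be a finite tree (a connected graph with no cycles) with all vertex degrees at most d, equipped with the zero deficit function. Then the matrix H_𝒢 − z − Σ_v ((d − deg_𝒢(v))/(d−1))·m_sc(z)·e_vv is invertible, and its inverse satisfies G_{ij}(Ext(𝒢, m_sc(z)), z) = m_d(z)·(−m_sc(z)/√(d−1))^{dist_𝒢(i,j)} for all vertices i, j, where dist_𝒢 is the graph distance. -/
open scoped Classical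

noncomputable section

namespace Paper

/-- The degree of a vertex `v` in `G`. -/
def deg {V : Type} (G : SimpleGraph V) (v : V) : ℕ :=
  Nat.card {u : V // G.Adj v u}

/-- `G` is a `d`-regular graph. -/
def IsRegular {V : Type} (d : ℕ) (G : SimpleGraph V) : Prop :=
  ∀ v, deg G v = d

/-- The excess of a finite graph: #edges - #vertices + #components. -/
def excess {V : Type} (G : SimpleGraph V) : ℤ :=
  (Nat.card G.edgeSet : ℤ) - (Nat.card V : ℤ) + (Nat.card G.ConnectedComponent : ℤ)

/-- The set of vertices at graph distance at most `R` from the set `S`. -/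
def ball {V : Type} (G : SimpleGraph V) (S : Set V) (R : ℝ) : Set V :=
  {v | ∃ u ∈ S, ∃ w : G.Walk u v, (w.length : ℝ) ≤ R}

/-- There is a path between `u` and `v` of length at most `R`. -/
def distLE {V : Type} (G : SimpleGraph V) (u v : V) (R : ℝ) : Prop :=
  ∃ w : G.Walk u v, (w.length : ℝ) ≤ R

/-- The normalized adjacency matrix `A/√(d-1)`, over `ℂ`. -/
def normAdj {V : Type} (d : ℕ) (G : SimpleGraph V) : Matrix V V ℂ :=
  Matrix.of fun i j => if G.Adj i j then ((Real.sqrt ((d : ℝ) - 1) : ℂ))⁻¹ else 0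

/-- The normalized adjacency matrix `A/√(d-1)`, over `ℝ`. -/
def normAdjR {V : Type} (d : ℕ) (G : SimpleGraph V) : Matrix V V ℝ :=
  Matrix.of fun i j => if G.Adj i j then (Real.sqrt ((d : ℝ) - 1))⁻¹ else 0

/-- The Green's function `(H - z)⁻¹`. -/
def green {V : Type} [Fintype V] [DecidableEq V] (d : ℕ) (G : SimpleGraph V) (z : ℂ) :
    Matrix V V ℂ :=
  (normAdj d G - z • (1 : Matrix V V ℂ))⁻¹

/-- The Stieltjes transform `m_N(z) = Tr G(z)/N`. -/
def mN {V : Type} [Fintype V] [DecidableEq V] (d : ℕ) (G : SimpleGraph V) (z : ℂ) : ℂ :=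
  (Nat.card V : ℂ)⁻¹ * Matrix.trace (green d G z)

/-- `m_sc(z)`: the root of `m² + zm + 1 = 0` with positive imaginary part. -/
def mSC (z : ℂ) : ℂ :=
  if h : ∃ m : ℂ, m ^ 2 + z * m + 1 = 0 ∧ 0 < m.im then h.choose else 0

/-- `m_d(z) = (-z - d m_sc(z)/(d-1))⁻¹`. -/
def mD (d : ℕ) (z : ℂ) : ℂ :=
  (-z - (d : ℂ) * mSC z / ((d : ℂ) - 1))⁻¹

/-- `κ(z) = min(|Re z - 2|, |Re z + 2|)`. -/
def kappa (z : ℂ) : ℝ :=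
  min |z.re - 2| |z.re + 2|

/-- The matrix `H - z - Σ_v ((d - g v - deg v)/(d-1)) Δ e_vv` defining the
extension of `(G, g)` with weight `Δ`. -/
def extMatrix {V : Type} [Fintype V] [DecidableEq V] (d : ℕ) (G : SimpleGraph V)
    (g : V → ℕ) (Δ z : ℂ) : Matrix V V ℂ :=
  normAdj d G - z • (1 : Matrix V V ℂ) -
    Matrix.diagonal fun v => (((d : ℂ) - (g v : ℂ) - (deg G v : ℂ)) / ((d : ℂ) - 1)) * Δ

/-- The Green's function of the extension of `(G, g)` with weight `Δ`. -/
def extGreen {V : Type} [Fintype V] [DecidableEq V] (d : ℕ) (G : SimpleGraph V)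
    (g : V → ℕ) (Δ z : ℂ) : Matrix V V ℂ :=
  (extMatrix d G g Δ z)⁻¹

/-- Entry `(i,j)` of the Green's function of the extension with weight `Δ` of the
ball `B_R(S, G)`, the ball carrying the deficit function inherited from the ambient
deficit function `g0`. -/
def ballGreen {V : Type} [Fintype V] [DecidableEq V] (d : ℕ) (G : SimpleGraph V)
    (g0 : V → ℕ) (S : Set V) (R : ℝ) (Δ z : ℂ) (i j : V) : ℂ :=
  if h : i ∈ ball G S R ∧ j ∈ ball G S R then
    extGreen d (G.induce (ball G S R)) (fun v => g0 v.val) Δ z ⟨i, h.1⟩ ⟨j, h.2⟩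
  else 0

/-- The quantity `Q(G,z) = (Nd)⁻¹ Σ_{i ∼ j} G^{(j)}_{ii}(z)`. -/
def Qfun {N : ℕ} (d : ℕ) (G : SimpleGraph (Fin N)) (z : ℂ) : ℂ :=
  ((N : ℂ) * (d : ℂ))⁻¹ *
    ∑ j : Fin N, ∑ i : Fin N,
      if h : G.Adj i j then
        green d (G.induce {k : Fin N | k ≠ j}) z ⟨i, h.ne⟩ ⟨i, h.ne⟩
      else 0

/-- Logarithm in base `d - 1`. -/
def logb (d : ℕ) (x : ℝ) : ℝ :=
  Real.log x / Real.log ((d : ℝ) - 1)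

/-- The radius `ℜ = (c/4) log_{d-1} N`. -/
def RR (N d : ℕ) (c : ℝ) : ℝ :=
  (c / 4) * logb d (N : ℝ)

/-- The radius `r = r₀ log_{d-1} N`. -/
def rr (N d : ℕ) (r₀ : ℝ) : ℝ :=
  r₀ * logb d (N : ℝ)

/-- The set `Ω̄(ω)` of radius-`ℜ` tree-like `d`-regular graphs. -/
def OmegaBar (N d : ℕ) (c : ℝ) (ω : ℕ) : Set (SimpleGraph (Fin N)) :=
  {G | IsRegular d G ∧
    (∀ v : Fin N, excess (G.induce (ball G {v} (RR N d c))) ≤ (ω : ℤ)) ∧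
    (Nat.card {v : Fin N // ¬ (G.induce (ball G {v} (RR N d c))).IsAcyclic} : ℝ) ≤ (N : ℝ) ^ c}

/-- The control parameter `ε₀(z)`. -/
def eps0 (N d : ℕ) (a r : ℝ) (z : ℂ) : ℝ :=
  Real.log (N : ℝ) ^ (8 * a) *
    (((d : ℝ) - 1) ^ (-r) + Real.sqrt ((mD d z).im / ((N : ℝ) * z.im)) +
      ((N : ℝ) * z.im) ^ (-(2 / 3 : ℝ)))

/-- The control parameter `ε(z)`. -/
def eps (N d : ℕ) (a r : ℝ) (z : ℂ) : ℝ :=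
  if eps0 N d a r z ≤ (kappa z + z.im) / Real.log (N : ℝ) then eps0 N d a r z
  else Real.log (N : ℝ) ^ 4 * eps0 N d a r z

/-- The set `Ω(z)` of spectrally regular graphs. -/
def OmegaSet (N d : ℕ) (c a r₀ : ℝ) (ω : ℕ) (z : ℂ) : Set (SimpleGraph (Fin N)) :=
  {G | G ∈ OmegaBar N d c ω ∧
    ‖Qfun d G z - mSC z‖ ≤
      eps N d a (rr N d r₀) z / Real.sqrt (kappa z + z.im + eps N d a (rr N d r₀) z) ∧
    ∀ i j : Fin N,
      ‖green d G z i j -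
          ballGreen d G (fun v => d - deg G v) {i, j} (rr N d r₀) (Qfun d G z) z i j‖ ≤
        eps N d a (rr N d r₀) z}

/-- The set `Ω⁻(z)`. -/
def OmegaMinus (N d : ℕ) (c a r₀ : ℝ) (ω : ℕ) (z : ℂ) : Set (SimpleGraph (Fin N)) :=
  {G | G ∈ OmegaBar N d c ω ∧
    ‖Qfun d G z - mSC z‖ ≤
      eps N d a (rr N d r₀) z / (2 * Real.sqrt (kappa z + z.im + eps N d a (rr N d r₀) z)) ∧
    ∀ i j : Fin N,
      ‖green d G z i j -
          ballGreen d G (fun v => d - deg G v) {i, j} (rr N d r₀) (Qfun d G z) z i j‖ ≤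
        eps N d a (rr N d r₀) z / 2}

/-- `(T, o)` is a depth-`k` truncated `(d-1)`-ary tree with root `o`. -/
def IsTruncAry (d k : ℕ) {V : Type} (T : SimpleGraph V) (o : V) : Prop :=
  T.IsTree ∧ (∀ v, T.dist o v ≤ k) ∧ deg T o = d - 1 ∧
    ∀ v, v ≠ o → T.dist o v < k → deg T v = d

/-- `(T, o)` is a depth-`k` truncated `d`-regular tree with root `o`. -/
def IsTruncReg (d k : ℕ) {V : Type} (T : SimpleGraph V) (o : V) : Prop :=
  T.IsTree ∧ (∀ v, T.dist o v ≤ k) ∧ ∀ v, T.dist o v < k → deg T v = d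

/-- The Kesten–McKay density. -/
def rhoD (d : ℕ) (x : ℝ) : ℝ :=
  (1 + 1 / ((d : ℝ) - 1) - x ^ 2 / (d : ℝ))⁻¹ * Real.sqrt (max (4 - x ^ 2) 0) / (2 * Real.pi)

/-- The diameter of a finite graph. -/
def gDiam {V : Type} [Fintype V] (T : SimpleGraph V) : ℕ :=
  Finset.univ.sup fun p : V × V => T.dist p.1 p.2

/-- The set of boundary edges of `s`, oriented from inside to outside. -/
def bndSet {V : Type} (G : SimpleGraph V) (s : Set V) : Set (V × V) :=
  {p | G.Adj p.1 p.2 ∧ p.1 ∈ s ∧ p.2 ∉ s}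

/-- The vertex set of the connected component of `u` in the subgraph induced on `s`. -/
def comp {V : Type} (G : SimpleGraph V) (s : Set V) (u : V) : Set V :=
  {w | ∃ (hu : u ∈ s) (hw : w ∈ s), (G.induce s).Reachable ⟨u, hu⟩ ⟨w, hw⟩}

/-- The number of neighbors of `v` inside `s`. -/
def degIn {V : Type} (G : SimpleGraph V) (s : Set V) (v : V) : ℕ :=
  Nat.card {w : V // w ∈ s ∧ G.Adj v w}

/-- The deterministic correction `δ_Q(z)`. -/
def deltaQ (N d l : ℕ) (z : ℂ) : ℂ :=
  (((d : ℂ) - 1) ^ (l + 1) - 1) * mSC z ^ (2 * l + 2) *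
    (1 + mSC z / (Real.sqrt ((d : ℝ) - 1) : ℂ)) ^ 2 *
    ((N : ℂ) * ((d : ℂ) / (Real.sqrt ((d : ℝ) - 1) : ℂ) - z))⁻¹


open SimpleGraph in
lemma tree_path_length {V : Type} {T : SimpleGraph V} (hT : T.IsTree) {u v : V}
    {p : T.Walk u v} (hp : p.IsPath) : p.length = T.dist u v := by
  obtain ⟨q, hq, hql⟩ := hT.isConnected.exists_path_of_dist u v
  have := hT.IsAcyclic.path_unique ⟨p, hp⟩ ⟨q, hq⟩
  rw [← hql]
  exact congrArg SimpleGraph.Walk.length (congrArg Subtype.val this)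

open SimpleGraph in
lemma tree_neighbor_dist {V : Type} {T : SimpleGraph V} (hT : T.IsTree) {i j : V}
    (hij : i ≠ j) :
    ∃ k₀, T.Adj i k₀ ∧ T.dist k₀ j + 1 = T.dist i j ∧
      ∀ k, T.Adj i k → k ≠ k₀ → T.dist k j = T.dist i j + 1 := by
  obtain ⟨p, hp, hpl⟩ := hT.isConnected.exists_path_of_dist i j
  have hD : 0 < T.dist i j := hT.isConnected.pos_dist_of_ne hij
  cases p with
  | nil => simp at hpl; exact absurd rfl hij
  | @cons _ k₀ _ h q =>
    refine ⟨k₀, h, ?_, ?_⟩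
    · have hq : q.IsPath := hp.of_cons
      have h1 : q.length = T.dist k₀ j := tree_path_length hT hq
      rw [Walk.length_cons] at hpl
      omega
    · intro k hk hkne
      obtain ⟨r, hr, hrl⟩ := hT.isConnected.exists_path_of_dist k j
      by_cases hi : i ∈ r.support
      · have h1 : (r.takeUntil i hi).length = T.dist k i :=
          tree_path_length hT (hr.takeUntil hi)
        have h2 : (r.dropUntil i hi).length = T.dist i j :=
          tree_path_length hT (hr.dropUntil hi)
        have h3 : (r.takeUntil i hi).length + (r.dropUntil i hi).length = r.length := by
          rw [← Walk.length_append, Walk.take_spec]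
        have h4 : T.dist k i = 1 := dist_eq_one_iff_adj.2 hk.symm
        omega
      · exfalso
        have hcons : (Walk.cons hk r).IsPath := hr.cons hi
        have h6 : Walk.cons hk r = Walk.cons h q := by
          have := hT.IsAcyclic.path_unique ⟨Walk.cons hk r, hcons⟩ ⟨Walk.cons h q, hp⟩
          exact congrArg Subtype.val this
        have h7 : (Walk.cons hk r).getVert 1 = (Walk.cons h q).getVert 1 := by rw [h6]
        simp [Walk.getVert_cons_succ, Walk.getVert_zero] at h7
        exact hkne h7

lemma mSC_exists {z : ℂ} (hz : 0 < z.im) : ∃ m : ℂ, m ^ 2 + z * m + 1 = 0 ∧ 0 < m.im := by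
  obtain ⟨w, hw⟩ : ∃ w : ℂ, w ^ 2 = z ^ 2 - 4 :=
    IsAlgClosed.exists_pow_nat_eq (z ^ 2 - 4) (n := 2) (by norm_num)
  set m₁ := (-z + w) / 2 with hm₁
  set m₂ := (-z - w) / 2 with hm₂
  have e₁ : m₁ ^ 2 + z * m₁ + 1 = 0 := by
    rw [hm₁]; field_simp; linear_combination hw
  have e₂ : m₂ ^ 2 + z * m₂ + 1 = 0 := by
    rw [hm₂]; field_simp; linear_combination hw
  have hprod : m₁ * m₂ = 1 := by rw [hm₁, hm₂]; field_simp; linear_combination -hw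
  have h₁0 : m₁ ≠ 0 := fun h0 => by simp [h0] at hprod
  have hm2 : m₂ = m₁⁻¹ := eq_inv_of_mul_eq_one_right hprod
  have him2 : m₂.im = -m₁.im / Complex.normSq m₁ := by rw [hm2, Complex.inv_im]
  have hsum : m₁.im + m₂.im = -z.im := by
    have h9 : m₁ + m₂ = -z := by rw [hm₁, hm₂]; ring
    calc m₁.im + m₂.im = (m₁ + m₂).im := by simp
    _ = -z.im := by rw [h9]; simp
  rcases lt_trichotomy 0 m₁.im with h | h | h
  · exact ⟨m₁, e₁, h⟩
  · exfalso
    rw [him2, ← h] at hsum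
    simp at hsum
    linarith
  · refine ⟨m₂, e₂, ?_⟩
    rw [him2]
    exact div_pos (by linarith) (Complex.normSq_pos.2 h₁0)

lemma mSC_spec {z : ℂ} (hz : 0 < z.im) :
    (mSC z) ^ 2 + z * mSC z + 1 = 0 ∧ 0 < (mSC z).im := by
  rw [mSC, dif_pos (mSC_exists hz)]
  exact (mSC_exists hz).choose_spec

lemma deg_eq_card {V : Type} [Fintype V] (T : SimpleGraph V) (v : V) :
    deg T v = (T.neighborFinset v).card := by
  rw [deg, SimpleGraph.neighborFinset, Set.toFinset_card, Nat.card_eq_fintype_card]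
  exact Fintype.card_congr (Equiv.subtypeEquivRight (fun u => by simp))

/-- Green's function of the extension of a finite tree (zero deficit
function) with weight `m_sc(z)`: invertibility and the explicit formula
`G_ij = m_d(z) (-m_sc(z)/√(d-1))^{dist(i,j)}`. -/
theorem statement10 (d : ℕ) (hd : 3 ≤ d) {V : Type} [Fintype V] [DecidableEq V]
    (T : SimpleGraph V) (hT : T.IsTree) (hdeg : ∀ v, deg T v ≤ d) (z : ℂ) (hz : 0 < z.im) :
    IsUnit (extMatrix d T (fun _ => 0) (mSC z) z) ∧
      ∀ i j : V,
        extGreen d T (fun _ => 0) (mSC z) z i j =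
          mD d z * (-(mSC z) / (Real.sqrt ((d : ℝ) - 1) : ℂ)) ^ T.dist i j := by
  classical
  obtain ⟨hm1, hm2⟩ := mSC_spec hz
  set m := mSC z with hm
  have hm0 : m ≠ 0 := by
    intro h0
    rw [h0] at hm1
    simp at hm1
  have hd1R : (0:ℝ) < (d:ℝ) - 1 := by
    have h3 : (3:ℝ) ≤ (d:ℝ) := by exact_mod_cast hd
    linarith
  set sR := Real.sqrt ((d:ℝ) - 1) with hsR
  have hsR0 : 0 < sR := Real.sqrt_pos.2 hd1R
  set s : ℂ := (sR : ℂ) with hs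
  have hs0 : s ≠ 0 := by
    rw [hs]
    exact_mod_cast hsR0.ne'
  have hs2 : s ^ 2 = (d:ℂ) - 1 := by
    rw [hs, ← Complex.ofReal_pow, hsR, Real.sq_sqrt hd1R.le]
    push_cast
    ring
  have hd1 : ((d:ℂ) - 1) ≠ 0 := by rw [← hs2]; exact pow_ne_zero _ hs0
  set β : ℂ := -z - (d:ℂ) * m / ((d:ℂ) - 1) with hβ
  have heq : (d:ℂ) * m / ((d:ℂ) - 1) = (((d:ℝ) / ((d:ℝ) - 1) : ℝ) : ℂ) * m := by
    push_cast
    rw [div_mul_eq_mul_div]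
  have hβim : β.im < 0 := by
    have him : β.im = -z.im - ((d:ℝ) / ((d:ℝ) - 1)) * m.im := by
      rw [hβ, Complex.sub_im, Complex.neg_im, heq, Complex.im_ofReal_mul]
    have hc : (0:ℝ) < (d:ℝ) / ((d:ℝ) - 1) := div_pos (by linarith) hd1R
    have := mul_pos hc hm2
    rw [him]; linarith
  have hβ0 : β ≠ 0 := by
    intro h0
    rw [h0] at hβim
    simp at hβim
  set w : ℂ := -m / s with hw
  set M : Matrix V V ℂ := Matrix.of (fun i j => β⁻¹ * w ^ T.dist i j) with hMdef
  have hE : ∀ i k, extMatrix d T (fun _ => 0) m z i k =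
      (if T.Adj i k then s⁻¹ else 0) -
        (if i = k then z + (((d:ℂ) - (deg T i : ℂ)) / ((d:ℂ) - 1)) * m else 0) := by
    intro i k
    by_cases h : i = k
    · subst h
      simp [extMatrix, normAdj, Matrix.sub_apply, Matrix.smul_apply, Matrix.one_apply,
        Matrix.diagonal_apply, hs, T.irrefl]
      ring
    · simp [extMatrix, normAdj, Matrix.sub_apply, Matrix.smul_apply, Matrix.one_apply,
        Matrix.diagonal_apply, h, hs, hsR]
  have key : extMatrix d T (fun _ => 0) m z * M = 1 := by
    ext i j
    rw [Matrix.mul_apply]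
    simp only [hE, sub_mul, ite_mul, zero_mul, Finset.sum_sub_distrib]
    rw [Finset.sum_ite_eq]
    simp only [Finset.mem_univ, if_true]
    have hN : ∀ f : V → ℂ, (∑ k, if T.Adj i k then f k else 0)
        = ∑ k ∈ T.neighborFinset i, f k := by
      intro f
      rw [← Finset.sum_filter]
      congr 1
      ext k
      simp [SimpleGraph.mem_neighborFinset]
    rw [hN]
    by_cases hij : i = j
    · subst hij
      have hsum : (∑ k ∈ T.neighborFinset i, s⁻¹ * M k i)
          = ((deg T i : ℕ) : ℂ) * (s⁻¹ * (β⁻¹ * w)) := by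
        rw [Finset.sum_congr rfl (fun k hk => ?_), Finset.sum_const, nsmul_eq_mul,
          deg_eq_card]
        rw [SimpleGraph.mem_neighborFinset] at hk
        have hd1k : T.dist k i = 1 := SimpleGraph.dist_eq_one_iff_adj.2 hk.symm
        simp [hMdef, hd1k]
      rw [hsum, Matrix.one_apply_eq]
      have hMii : M i i = β⁻¹ := by simp [hMdef, SimpleGraph.dist_self]
      rw [hMii]
      have hfact : ((deg T i : ℕ) : ℂ) * (s⁻¹ * (β⁻¹ * w)) -
          (z + (((d:ℂ) - (deg T i : ℂ)) / ((d:ℂ) - 1)) * m) * β⁻¹ =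
          β⁻¹ * (((deg T i : ℕ) : ℂ) * s⁻¹ * w -
            (z + (((d:ℂ) - (deg T i : ℂ)) / ((d:ℂ) - 1)) * m)) := by ring
      rw [hfact]
      have hβeq : ((deg T i : ℕ) : ℂ) * s⁻¹ * w -
          (z + (((d:ℂ) - (deg T i : ℂ)) / ((d:ℂ) - 1)) * m) = β := by
        rw [hw, hβ, ← hs2]
        field_simp
        ring
      rw [hβeq]
      exact inv_mul_cancel₀ hβ0
    · obtain ⟨k₀, hk₀adj, hk₀dist, hother⟩ := tree_neighbor_dist hT hij
      have hk₀mem : k₀ ∈ T.neighborFinset i := by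
        rw [SimpleGraph.mem_neighborFinset]; exact hk₀adj
      rw [← Finset.add_sum_erase _ _ hk₀mem, Matrix.one_apply_ne hij]
      have hcard1 : 1 ≤ (T.neighborFinset i).card := Finset.card_pos.2 ⟨k₀, hk₀mem⟩
      have hconst : ∀ k ∈ (T.neighborFinset i).erase k₀,
          s⁻¹ * M k j = s⁻¹ * (β⁻¹ * w ^ (T.dist i j + 1)) := by
        intro k hk
        obtain ⟨hne, hmem⟩ := Finset.mem_erase.1 hk
        rw [SimpleGraph.mem_neighborFinset] at hmem
        simp only [hMdef, Matrix.of_apply]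
        rw [hother k hmem hne]
      rw [Finset.sum_congr rfl hconst, Finset.sum_const, Finset.card_erase_of_mem hk₀mem,
        nsmul_eq_mul, Nat.cast_sub hcard1, ← deg_eq_card]
      simp only [hMdef, Matrix.of_apply]
      set D := T.dist k₀ j with hD
      have hijd : T.dist i j = D + 1 := by omega
      rw [hijd]
      have hkey2 : s⁻¹ + (((deg T i : ℕ) : ℂ) - 1) * s⁻¹ * w ^ 2 -
          (z + (((d:ℂ) - (deg T i : ℂ)) / ((d:ℂ) - 1)) * m) * w = 0 := by
        rw [hw, ← hs2]
        field_simp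
        linear_combination s^2 * hm1 - m^2 * hs2
      push_cast
      linear_combination (β⁻¹ * w ^ D) * hkey2
  refine ⟨(Matrix.isUnit_iff_isUnit_det _).2 (Matrix.isUnit_det_of_right_inverse key), ?_⟩
  have hMA : (extMatrix d T (fun _ => 0) m z)⁻¹ = M := Matrix.inv_eq_right_inv key
  intro i j
  show (extMatrix d T (fun _ => 0) m z)⁻¹ i j = _
  rw [hMA]
  simp only [hMdef, Matrix.of_apply]
  rfl

end Paper
end
end

section
/- Under the setup in the context, assume that the ball B_R(o,𝒢) has excess at most ω. Let 𝒜 be the annulus obtained from B_R(o,𝒢) by deleting the vertices of 𝕋, and partition {1,…,μ} into classes A_1,…,A_κ by declaring α and β to lie in the same class if and only if a_α and a_β belong to the same connected component of 𝒜. Then Σ_{s : |A_s| ≥ 2} |A_s| ≤ 2ω, and for every s ∈ {1,…,κ}, the connected component of 𝒜 containing the vertices {a_α : α ∈ A_s} has excess at most ω − |A_s| + 1. -/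
open scoped Classical

noncomputable section

namespace Paper

/-! ### Auxiliary lemmas for statement17 -/

section Aux

open SimpleGraph

variable {V : Type}

lemma reachable_of_mem_support' {G : SimpleGraph V} {u v z : V} (w : G.Walk u v)
    (hz : z ∈ w.support) : G.Reachable u z := by
  classical
  exact ⟨w.takeUntil z hz⟩

lemma reachable_induce_of_support {G : SimpleGraph V} {s s' : Set V} {x y : ↥s}
    (w : (G.induce s).Walk x y) (hw : ∀ z ∈ w.support, (z : V) ∈ s')
    (hx : (x : V) ∈ s') (hy : (y : V) ∈ s') :
    (G.induce s').Reachable ⟨x, hx⟩ ⟨y, hy⟩ := by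
  induction w with
  | nil => exact Reachable.refl _
  | @cons a b c h p ih =>
    have hb : (b : V) ∈ s' := hw b (by simp)
    have h1 : (G.induce s').Adj ⟨a, hx⟩ ⟨b, hb⟩ := by
      simpa using (by simpa using h : G.Adj (a : V) (b : V))
    exact h1.reachable.trans (ih (fun z hz => hw z (by simp [hz])) hb hy)

lemma mem_comp_self {G : SimpleGraph V} {s : Set V} {u : V} (hu : u ∈ s) :
    u ∈ comp G s u := ⟨hu, hu, Reachable.refl _⟩

lemma comp_subset {G : SimpleGraph V} {s : Set V} {u : V} : comp G s u ⊆ s :=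
  fun _ h => h.2.1

lemma mem_comp_iff {G : SimpleGraph V} {s : Set V} {u w : V} (hu : u ∈ s) (hw : w ∈ s) :
    w ∈ comp G s u ↔ (G.induce s).Reachable ⟨u, hu⟩ ⟨w, hw⟩ := by
  constructor
  · rintro ⟨h1, h2, h3⟩; exact h3
  · intro h; exact ⟨hu, hw, h⟩

lemma comp_congr {G : SimpleGraph V} {s : Set V} {u v : V} (hv : v ∈ comp G s u) :
    comp G s v = comp G s u := by
  obtain ⟨hu, hv', r⟩ := hv
  ext w
  constructor
  · rintro ⟨_, hw, r'⟩; exact ⟨hu, hw, r.trans r'⟩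
  · rintro ⟨_, hw, r'⟩; exact ⟨hv', hw, r.symm.trans r'⟩

lemma comp_closed {G : SimpleGraph V} {s : Set V} {u v w : V} (hv : v ∈ comp G s u)
    (ha : G.Adj v w) (hw : w ∈ s) : w ∈ comp G s u := by
  obtain ⟨hu, hv', r⟩ := hv
  have : (G.induce s).Adj ⟨v, hv'⟩ ⟨w, hw⟩ := by simpa using ha
  exact ⟨hu, hw, r.trans this.reachable⟩

lemma support_subset_comp {G : SimpleGraph V} {s : Set V} {u : V} {hu : u ∈ s} {y : ↥s}
    (w : (G.induce s).Walk ⟨u, hu⟩ y) : ∀ z ∈ w.support, (z : V) ∈ comp G s u := by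
  intro z hz
  exact ⟨hu, z.2, reachable_of_mem_support' w hz⟩

lemma comp_connected {G : SimpleGraph V} {s : Set V} {u : V} (hu : u ∈ s) :
    (G.induce (comp G s u)).Connected := by
  rw [connected_iff]
  refine ⟨?_, ⟨⟨u, mem_comp_self hu⟩⟩⟩
  have key : ∀ a : ↥(comp G s u),
      (G.induce (comp G s u)).Reachable ⟨u, mem_comp_self hu⟩ a := by
    rintro ⟨va, ha⟩
    obtain ⟨_, hva, r⟩ := ha
    obtain ⟨w⟩ := r
    exact reachable_induce_of_support w (support_subset_comp w) (mem_comp_self hu) ⟨hu, hva, ⟨w⟩⟩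
  intro a b
  exact (key a).symm.trans (key b)

lemma mem_ball_self {G : SimpleGraph V} {o : V} {R : ℝ} (hR : 0 ≤ R) :
    o ∈ ball G {o} R := ⟨o, rfl, Walk.nil, by simpa using hR⟩

lemma ball_mono {G : SimpleGraph V} {S : Set V} {r R : ℝ} (h : r ≤ R) :
    ball G S r ⊆ ball G S R := fun v ⟨u, hu, w, hw⟩ => ⟨u, hu, w, hw.trans h⟩

lemma aux_ball_reach {G : SimpleGraph V} {o : V} {R : ℝ} (hR : 0 ≤ R) :
    ∀ {v : V} (w : G.Walk v o), ((w.length : ℝ) ≤ R) →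
      ∃ hv : v ∈ ball G {o} R,
        (G.induce (ball G {o} R)).Reachable ⟨v, hv⟩ ⟨o, mem_ball_self hR⟩ := by
  intro v w
  induction w with
  | nil => exact fun _ => ⟨mem_ball_self hR, Reachable.refl _⟩
  | @cons a b c h p ih =>
    intro hlen
    have hlen' : ((p.length : ℝ)) ≤ R := by
      simp only [Walk.length_cons] at hlen; push_cast at hlen ⊢; linarith
    obtain ⟨hb, hrb⟩ := ih hlen'
    have ha : a ∈ ball G {c} R :=
      ⟨c, rfl, (Walk.cons h p).reverse, by rwa [Walk.length_reverse]⟩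
    have hadj : (G.induce (ball G {c} R)).Adj ⟨a, ha⟩ ⟨b, hb⟩ := by simpa using h
    exact ⟨ha, hadj.reachable.trans hrb⟩

lemma ball_connected {G : SimpleGraph V} {o : V} {R : ℝ} (hR : 0 ≤ R) :
    (G.induce (ball G {o} R)).Connected := by
  rw [connected_iff]
  refine ⟨?_, ⟨⟨o, mem_ball_self hR⟩⟩⟩
  have key : ∀ a : ↥(ball G {o} R),
      (G.induce (ball G {o} R)).Reachable a ⟨o, mem_ball_self hR⟩ := by
    rintro ⟨va, o', ho', w, hw⟩
    rw [Set.mem_singleton_iff] at ho'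
    subst ho'
    obtain ⟨hv, hr⟩ := aux_ball_reach hR w.reverse (by rwa [Walk.length_reverse])
    exact hr
  intro a b
  exact (key a).trans (key b).symm

lemma mem_ball_succ {G : SimpleGraph V} {o v u : V} {ℓ : ℝ} (hv : v ∈ ball G {o} ℓ)
    (h : G.Adj v u) : u ∈ ball G {o} (ℓ + 1) := by
  obtain ⟨o', ho', w, hw⟩ := hv
  exact ⟨o', ho', w.concat h, by rw [Walk.length_concat]; push_cast; linarith⟩

lemma card_comps_of_connected {G : SimpleGraph V} (h : G.Connected) :
    Nat.card G.ConnectedComponent = 1 := by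
  rw [Nat.card_eq_one_iff_unique]
  constructor
  · constructor
    intro a b
    refine ConnectedComponent.ind₂ (fun u v => ?_) a b
    exact ConnectedComponent.eq.mpr (h.preconnected u v)
  · exact ⟨G.connectedComponentMk h.nonempty.some⟩

lemma key_del {G : SimpleGraph V} {x y : V} :
    ∀ {u v : V} (_ : G.Walk u v),
      (G.deleteEdges {s(x,y)}).connectedComponentMk u =
        (G.deleteEdges {s(x,y)}).connectedComponentMk v ∨
      (((G.deleteEdges {s(x,y)}).connectedComponentMk u =
          (G.deleteEdges {s(x,y)}).connectedComponentMk x ∨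
        (G.deleteEdges {s(x,y)}).connectedComponentMk u =
          (G.deleteEdges {s(x,y)}).connectedComponentMk y) ∧
       ((G.deleteEdges {s(x,y)}).connectedComponentMk v =
          (G.deleteEdges {s(x,y)}).connectedComponentMk x ∨
        (G.deleteEdges {s(x,y)}).connectedComponentMk v =
          (G.deleteEdges {s(x,y)}).connectedComponentMk y)) := by
  intro u v w
  set C := (G.deleteEdges {s(x,y)}).connectedComponentMk with hC
  induction w with
  | nil => exact Or.inl rfl
  | @cons a b c h p ih =>
    by_cases he : s(a, b) = s(x, y)
    · have hab : (a = x ∧ b = y) ∨ (a = y ∧ b = x) := Sym2.eq_iff.mp he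
      have ha : C a = C x ∨ C a = C y := by
        rcases hab with ⟨h1, _⟩ | ⟨h1, _⟩
        · exact Or.inl (by rw [h1])
        · exact Or.inr (by rw [h1])
      have hb : C b = C x ∨ C b = C y := by
        rcases hab with ⟨_, h1⟩ | ⟨_, h1⟩
        · exact Or.inr (by rw [h1])
        · exact Or.inl (by rw [h1])
      refine Or.inr ⟨ha, ?_⟩
      rcases ih with h1 | ⟨_, h1⟩
      · rwa [← h1]
      · exact h1
    · have hadj : (G.deleteEdges {s(x,y)}).Adj a b :=
        deleteEdges_adj.mpr ⟨h, by simpa using he⟩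
      have hab : C a = C b := ConnectedComponent.eq.mpr hadj.reachable
      rw [hab]
      exact ih

lemma card_comps_deleteEdges_le [Finite V] (G : SimpleGraph V) (x y : V) :
    Nat.card (G.deleteEdges {s(x,y)}).ConnectedComponent ≤
      Nat.card G.ConnectedComponent + 1 := by
  set G' := G.deleteEdges {s(x,y)} with hG'
  set C := G'.connectedComponentMk with hC
  let φ : G'.ConnectedComponent → G.ConnectedComponent :=
    ConnectedComponent.map (Hom.ofLE (deleteEdges_le _))
  have hinj : ∀ c1 c2 : G'.ConnectedComponent, φ c1 = φ c2 →
      c1 ≠ C x → c2 ≠ C x → c1 = c2 := by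
    refine ConnectedComponent.ind₂ (fun u v => ?_)
    intro heq hu hv
    have hr : G.Reachable u v := by
      refine ConnectedComponent.eq.mp ?_
      simpa [φ, ConnectedComponent.map_mk] using heq
    obtain ⟨w⟩ := hr
    rcases key_del w with h | ⟨h1, h2⟩
    · exact h
    · rcases h1 with h1 | h1
      · exact absurd h1 hu
      · rcases h2 with h2 | h2
        · exact absurd h2 hv
        · rw [h1, h2]
  have h1 : Nat.card {c : G'.ConnectedComponent // ¬ c = C x} ≤
      Nat.card G.ConnectedComponent := by
    refine Nat.card_le_card_of_injective (fun c => φ c.1) ?_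
    rintro ⟨c1, hc1⟩ ⟨c2, hc2⟩ heq
    exact Subtype.ext (hinj c1 c2 heq hc1 hc2)
  have h2 : Nat.card G'.ConnectedComponent =
      Nat.card {c : G'.ConnectedComponent // c = C x} +
        Nat.card {c : G'.ConnectedComponent // ¬ c = C x} := by
    rw [← Nat.card_sum]
    exact Nat.card_congr (Equiv.sumCompl _).symm
  have h3 : Nat.card {c : G'.ConnectedComponent // c = C x} = 1 := by
    rw [Nat.card_eq_one_iff_unique]
    exact ⟨⟨fun a b => Subtype.ext (a.2.trans b.2.symm)⟩, ⟨⟨C x, rfl⟩⟩⟩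
  omega

lemma card_le_edge_add_comps [Fintype V] (G : SimpleGraph V) :
    Nat.card V ≤ Nat.card G.edgeSet + Nat.card G.ConnectedComponent := by
  classical
  suffices h : ∀ (n : ℕ) (G : SimpleGraph V), Nat.card G.edgeSet = n →
      Nat.card V ≤ Nat.card G.edgeSet + Nat.card G.ConnectedComponent from h _ G rfl
  intro n
  induction n using Nat.strong_induction_on with
  | _ n ih =>
    intro G hn
    by_cases hadj : ∃ x y, G.Adj x y
    · obtain ⟨x, y, hxy⟩ := hadj
      have he : s(x, y) ∈ G.edgeSet := hxy
      have hpos : 1 ≤ Nat.card G.edgeSet :=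
        Nat.one_le_iff_ne_zero.mpr (Nat.card_ne_zero.mpr ⟨⟨⟨_, he⟩⟩, inferInstance⟩)
      have hcard : Nat.card (G.deleteEdges {s(x,y)}).edgeSet = Nat.card G.edgeSet - 1 := by
        rw [Nat.card_coe_set_eq, Nat.card_coe_set_eq, edgeSet_deleteEdges,
          Set.ncard_diff_singleton_of_mem he]
      have hlt : Nat.card G.edgeSet - 1 < n := by omega
      have := ih _ hlt (G.deleteEdges {s(x,y)}) (by rw [hcard])
      have hcomps := card_comps_deleteEdges_le G x y
      omega
    · have hG : G = ⊥ := by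
        ext a b
        simp only [bot_adj, iff_false]
        exact fun h => hadj ⟨a, b, h⟩
      subst hG
      have hbij : Function.Bijective (⊥ : SimpleGraph V).connectedComponentMk := by
        constructor
        · intro a b hab
          exact reachable_bot.mp (ConnectedComponent.eq.mp hab)
        · exact ConnectedComponent.ind (fun v => ⟨v, rfl⟩)
      have : Nat.card V = Nat.card (⊥ : SimpleGraph V).ConnectedComponent :=
        Nat.card_congr (Equiv.ofBijective _ hbij)
      omega

variable [Fintype V]

def eFin (G : SimpleGraph V) (s : Set V) : Finset (Sym2 V) :=
  Finset.univ.filter (fun e => e ∈ G.edgeSet ∧ ∀ v ∈ e, v ∈ s)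

lemma mem_eFin_iff {G : SimpleGraph V} {s : Set V} {a b : V} :
    s(a, b) ∈ eFin G s ↔ G.Adj a b ∧ a ∈ s ∧ b ∈ s := by
  simp only [eFin, Finset.mem_filter, Finset.mem_univ, true_and, mem_edgeSet]
  constructor
  · rintro ⟨h1, h2⟩
    exact ⟨h1, h2 a (by simp), h2 b (by simp)⟩
  · rintro ⟨h1, h2, h3⟩
    refine ⟨h1, fun v hv => ?_⟩
    rcases Sym2.mem_iff.mp hv with rfl | rfl <;> assumption

lemma card_edge_induce (G : SimpleGraph V) (s : Set V) :
    Nat.card (G.induce s).edgeSet = (eFin G s).card := by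
  have hf : ∀ e : Sym2 ↥s, e ∈ (G.induce s).edgeSet → Sym2.map Subtype.val e ∈ eFin G s := by
    intro e
    induction e using Sym2.ind with
    | _ a b =>
      intro he
      rw [mem_edgeSet] at he
      have hadj : G.Adj (a : V) (b : V) := by simpa using he
      rw [Sym2.map_pair_eq, mem_eFin_iff]
      exact ⟨hadj, a.2, b.2⟩
  let f : (G.induce s).edgeSet → {e : Sym2 V // e ∈ eFin G s} :=
    fun e => ⟨Sym2.map Subtype.val e.1, hf e.1 e.2⟩
  have hbij : Function.Bijective f := by
    constructor
    · rintro ⟨e1, he1⟩ ⟨e2, he2⟩ h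
      have h' : Sym2.map Subtype.val e1 = Sym2.map Subtype.val e2 :=
        congrArg Subtype.val h
      exact Subtype.ext (Sym2.map.injective Subtype.val_injective h')
    · rintro ⟨e, he⟩
      induction e using Sym2.ind with
      | _ a b =>
        rw [mem_eFin_iff] at he
        obtain ⟨hadj, ha, hb⟩ := he
        refine ⟨⟨s(⟨a, ha⟩, ⟨b, hb⟩), ?_⟩, ?_⟩
        · rw [mem_edgeSet]; simpa using hadj
        · apply Subtype.ext
          simp [f, Sym2.map_pair_eq]
  calc Nat.card (G.induce s).edgeSet = Nat.card {e : Sym2 V // e ∈ eFin G s} :=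
        Nat.card_congr (Equiv.ofBijective f hbij)
    _ = (eFin G s).card := by
        rw [Nat.card_eq_fintype_card, Fintype.card_coe]

lemma card_subtype_eq_filter {α : Type} [Fintype α] (P : α → Prop) :
    Nat.card {x : α // P x} = (Finset.univ.filter P).card := by
  rw [Nat.card_eq_fintype_card]
  convert Fintype.card_subtype P

lemma card_edge_split (G : SimpleGraph V) {s t : Set V} (hst : s ⊆ t) :
    Nat.card (G.induce t).edgeSet =
      Nat.card (G.induce s).edgeSet + Nat.card (G.induce (t \ s)).edgeSet +
        Nat.card {p : V × V // p ∈ bndSet G s ∧ p.2 ∈ t} := by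
  rw [card_edge_induce, card_edge_induce, card_edge_induce, card_subtype_eq_filter]
  set X : Finset (V × V) := Finset.univ.filter (fun p => p ∈ bndSet G s ∧ p.2 ∈ t) with hX
  have hXmem : ∀ p : V × V, p ∈ X ↔ G.Adj p.1 p.2 ∧ p.1 ∈ s ∧ p.2 ∉ s ∧ p.2 ∈ t := by
    intro p
    simp only [hX, Finset.mem_filter, Finset.mem_univ, true_and, bndSet, Set.mem_setOf_eq]
    tauto
  have hsplit : eFin G t = (eFin G s ∪ eFin G (t \ s)) ∪ X.image (fun p => s(p.1, p.2)) := by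
    ext e
    induction e using Sym2.ind with
    | _ a b =>
      simp only [Finset.mem_union, Finset.mem_image, mem_eFin_iff]
      constructor
      · rintro ⟨hadj, ha, hb⟩
        by_cases has : a ∈ s <;> by_cases hbs : b ∈ s
        · exact Or.inl (Or.inl ⟨hadj, has, hbs⟩)
        · refine Or.inr ⟨(a, b), ?_, rfl⟩
          rw [hXmem]; exact ⟨hadj, has, hbs, hb⟩
        · refine Or.inr ⟨(b, a), ?_, Sym2.eq_swap⟩
          rw [hXmem]; exact ⟨hadj.symm, hbs, has, ha⟩
        · exact Or.inl (Or.inr ⟨hadj, ⟨ha, has⟩, ⟨hb, hbs⟩⟩)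
      · rintro ((⟨hadj, ha, hb⟩ | ⟨hadj, ha, hb⟩) | ⟨p, hp, hpe⟩)
        · exact ⟨hadj, hst ha, hst hb⟩
        · exact ⟨hadj, ha.1, hb.1⟩
        · rw [hXmem] at hp
          rcases Sym2.eq_iff.mp hpe with ⟨rfl, rfl⟩ | ⟨rfl, rfl⟩
          · exact ⟨hp.1, hst hp.2.1, hp.2.2.2⟩
          · exact ⟨hp.1.symm, hp.2.2.2, hst hp.2.1⟩
  have hdisj1 : Disjoint (eFin G s) (eFin G (t \ s)) := by
    rw [Finset.disjoint_left]
    intro e he1 he2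
    induction e using Sym2.ind with
    | _ a b =>
      rw [mem_eFin_iff] at he1 he2
      exact he2.2.1.2 he1.2.1
  have hdisj2 : Disjoint (eFin G s ∪ eFin G (t \ s)) (X.image (fun p => s(p.1, p.2))) := by
    rw [Finset.disjoint_right]
    intro e he1 he2
    obtain ⟨p, hp, rfl⟩ := Finset.mem_image.mp he1
    rw [hXmem] at hp
    rcases Finset.mem_union.mp he2 with h | h
    · rw [mem_eFin_iff] at h
      exact hp.2.2.1 h.2.2
    · rw [mem_eFin_iff] at h
      exact h.2.1.2 hp.2.1
  have hinj : Set.InjOn (fun p : V × V => s(p.1, p.2)) X := by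
    intro p hp q hq hpq
    rw [Finset.mem_coe, hXmem] at hp hq
    rcases Sym2.eq_iff.mp hpq with ⟨h1, h2⟩ | ⟨h1, h2⟩
    · exact Prod.ext h1 h2
    · exact absurd (h1 ▸ hp.2.1) hq.2.2.1
  rw [hsplit, Finset.card_union_of_disjoint hdisj2, Finset.card_union_of_disjoint hdisj1,
    Finset.card_image_of_injOn hinj, hX]
  congr

lemma card_vertex_split {s t : Set V} (hst : s ⊆ t) :
    Nat.card ↥t = Nat.card ↥s + Nat.card ↥(t \ s) := by
  rw [Nat.card_coe_set_eq, Nat.card_coe_set_eq, Nat.card_coe_set_eq,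
    ← Set.ncard_union_eq (Set.disjoint_sdiff_right.mono_left (le_refl s)) s.toFinite
      (t \ s).toFinite, Set.union_diff_cancel hst]

lemma card_multi_fiber {X Y : Type} [Fintype X] [Fintype Y] (f : X → Y)
    (hf : Function.Surjective f) :
    Nat.card {x : X // ∃ y : X, y ≠ x ∧ f y = f x} + 2 * Nat.card Y ≤ 2 * Nat.card X := by
  classical
  set P : X → Prop := fun x => ∃ y : X, y ≠ x ∧ f y = f x with hP
  rw [Nat.card_eq_fintype_card, Nat.card_eq_fintype_card, Nat.card_eq_fintype_card,
    Fintype.card_subtype]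
  have hX : Fintype.card X = ∑ y : Y, (Finset.univ.filter fun x => f x = y).card := by
    rw [← Finset.card_univ]
    exact Finset.card_eq_sum_card_fiberwise (fun x _ => Finset.mem_univ (f x))
  have hPcard : (Finset.univ.filter P).card =
      ∑ y : Y, ((Finset.univ.filter P).filter fun x => f x = y).card :=
    Finset.card_eq_sum_card_fiberwise (fun x _ => Finset.mem_univ (f x))
  have hpt : ∀ y : Y, ((Finset.univ.filter P).filter fun x => f x = y).card + 2 ≤
      2 * (Finset.univ.filter fun x => f x = y).card := by
    intro y
    set F := Finset.univ.filter fun x => f x = y with hF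
    have hsub : ((Finset.univ.filter P).filter fun x => f x = y) ⊆ F := by
      intro x hx
      simp only [Finset.mem_filter, Finset.mem_univ, true_and, hF] at hx ⊢
      exact hx.2
    have hne : F.Nonempty := by
      obtain ⟨x, hx⟩ := hf y
      exact ⟨x, by simp [hF, hx]⟩
    rcases lt_or_ge F.card 2 with h | h
    · have hempty : ((Finset.univ.filter P).filter fun x => f x = y) = ∅ := by
        rw [Finset.eq_empty_iff_forall_notMem]
        intro x hx
        simp only [Finset.mem_filter, Finset.mem_univ, true_and] at hx
        obtain ⟨⟨x', hx'ne, hfeq⟩, hfx⟩ := hx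
        have hx'F : x' ∈ F := by simp [hF, hfeq, hfx]
        have hxF : x ∈ F := by simp [hF, hfx]
        have : 1 < F.card := Finset.one_lt_card.mpr ⟨x', hx'F, x, hxF, hx'ne⟩
        omega
      rw [hempty]
      have := hne.card_pos
      simp only [Finset.card_empty]
      omega
    · have := Finset.card_le_card hsub
      omega
  calc (Finset.univ.filter P).card + 2 * Fintype.card Y
      = ∑ y : Y, (((Finset.univ.filter P).filter fun x => f x = y).card + 2) := by
        rw [Finset.sum_add_distrib, ← hPcard, Finset.sum_const, Finset.card_univ,
          smul_eq_mul]
        ring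
    _ ≤ ∑ y : Y, 2 * (Finset.univ.filter fun x => f x = y).card :=
        Finset.sum_le_sum (fun y _ => hpt y)
    _ = 2 * Fintype.card X := by rw [← Finset.mul_sum, ← hX]

lemma exists_bnd {G : SimpleGraph V} {T B : Set V} :
    ∀ {v o : V} (w : G.Walk v o), o ∈ T → (∀ z ∈ w.support, z ∈ B) → v ∉ T →
      ∃ p : V × V, p ∈ bndSet G T ∧ p.2 ∈ comp G (B \ T) v := by
  intro v o w
  induction w with
  | nil => exact fun ho _ hv => absurd ho hv
  | @cons a b c h p ih =>
    intro ho hsupp ha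
    have hb : b ∈ B := hsupp b (by simp)
    have haB : a ∈ B := hsupp a (by simp)
    by_cases hbT : b ∈ T
    · exact ⟨(b, a), ⟨h.symm, hbT, ha⟩, mem_comp_self ⟨haB, ha⟩⟩
    · obtain ⟨q, hq1, hq2⟩ := ih ho (fun z hz => hsupp z (by simp [hz])) hbT
      refine ⟨q, hq1, ?_⟩
      have hba : b ∈ comp G (B \ T) a := comp_closed (mem_comp_self ⟨haB, ha⟩) h ⟨hb, hbT⟩
      rwa [comp_congr hba] at hq2

theorem main_aux (G : SimpleGraph V) (T B : Set V)
    (hTB : T ⊆ B) (hTconn : (G.induce T).Connected) (hBconn : (G.induce B).Connected)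
    (hbnd2 : ∀ p : V × V, p ∈ bndSet G T → p.2 ∈ B \ T)
    (hF5 : ∀ v ∈ B \ T, ∃ q : V × V, q ∈ bndSet G T ∧ q.2 ∈ comp G (B \ T) v)
    (ω : ℕ) (hex : excess (G.induce B) ≤ (ω : ℤ)) :
    Nat.card {p : V × V // p ∈ bndSet G T ∧ ∃ q : V × V, q ∈ bndSet G T ∧ q ≠ p ∧
        q.2 ∈ comp G (B \ T) p.2} ≤ 2 * ω ∧
    ∀ p : V × V, p ∈ bndSet G T →
      excess (G.induce (comp G (B \ T) p.2)) +
        (Nat.card {q : V × V // q ∈ bndSet G T ∧ q.2 ∈ comp G (B \ T) p.2} : ℤ) ≤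
          (ω : ℤ) + 1 := by
  classical
  set A := B \ T with hA
  have hedge := card_edge_split G hTB
  rw [← hA] at hedge
  have hμeq : Nat.card {p : V × V // p ∈ bndSet G T ∧ p.2 ∈ B} =
      Nat.card {p : V × V // p ∈ bndSet G T} :=
    Nat.card_congr (Equiv.subtypeEquivRight (fun p =>
      ⟨fun h => h.1, fun h => ⟨h, (hbnd2 p h).1⟩⟩))
  have hvert := card_vertex_split (V := V) hTB
  rw [← hA] at hvert
  have hexB : (Nat.card (G.induce B).edgeSet : ℤ) - Nat.card ↥B + 1 ≤ ω := by
    unfold excess at hex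
    rw [card_comps_of_connected hBconn] at hex
    push_cast at hex
    exact hex
  have hTcount : Nat.card ↥T ≤ Nat.card (G.induce T).edgeSet + 1 := by
    have h := card_le_edge_add_comps (G.induce T)
    rwa [card_comps_of_connected hTconn] at h
  have key : (Nat.card {p : V × V // p ∈ bndSet G T} : ℤ) +
      Nat.card (G.induce A).edgeSet ≤ ω + Nat.card ↥A := by
    omega
  have hAnonneg := card_le_edge_add_comps (G.induce A)
  constructor
  · -- part 1
    let f : {p : V × V // p ∈ bndSet G T} → (G.induce A).ConnectedComponent :=
      fun p => (G.induce A).connectedComponentMk ⟨p.1.2, hbnd2 p.1 p.2⟩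
    have hsurj : Function.Surjective f := by
      refine SimpleGraph.ConnectedComponent.ind (fun x => ?_)
      obtain ⟨v, hv⟩ := x
      obtain ⟨q, hq, hq2⟩ := hF5 v hv
      refine ⟨⟨q, hq⟩, ?_⟩
      have hr := (mem_comp_iff hv (hbnd2 q hq)).mp hq2
      exact SimpleGraph.ConnectedComponent.eq.mpr hr.symm
    have hmf := card_multi_fiber f hsurj
    have hiff : ∀ x : {p : V × V // p ∈ bndSet G T},
        ((∃ q : V × V, q ∈ bndSet G T ∧ q ≠ x.1 ∧ q.2 ∈ comp G A x.1.2) ↔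
          ∃ y, y ≠ x ∧ f y = f x) := by
      intro x
      constructor
      · rintro ⟨q, hq, hne, hc⟩
        refine ⟨⟨q, hq⟩, fun h => hne (congrArg Subtype.val h), ?_⟩
        have hr := (mem_comp_iff (hbnd2 x.1 x.2) (hbnd2 q hq)).mp hc
        exact SimpleGraph.ConnectedComponent.eq.mpr hr.symm
      · rintro ⟨⟨q, hq⟩, hne, hfe⟩
        refine ⟨q, hq, fun h => hne (Subtype.ext h), ?_⟩
        exact (mem_comp_iff (hbnd2 x.1 x.2) (hbnd2 q hq)).mpr
          (SimpleGraph.ConnectedComponent.eq.mp hfe).symm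
    have hcardeq : Nat.card {p : V × V // p ∈ bndSet G T ∧
        ∃ q : V × V, q ∈ bndSet G T ∧ q ≠ p ∧ q.2 ∈ comp G A p.2} =
        Nat.card {x : {p : V × V // p ∈ bndSet G T} // ∃ y, y ≠ x ∧ f y = f x} :=
      Nat.card_congr ((Equiv.subtypeSubtypeEquivSubtypeInter _ _).symm.trans
        (Equiv.subtypeEquivRight hiff))
    rw [hcardeq]
    omega
  · -- part 2
    intro p hp
    have hpA : p.2 ∈ A := hbnd2 p hp
    have hCconn := comp_connected (G := G) (s := A) hpA
    have hCsub : comp G A p.2 ⊆ A := comp_subset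
    have hesplit := card_edge_split G hCsub
    have hzero : Nat.card {q : V × V // q ∈ bndSet G (comp G A p.2) ∧ q.2 ∈ A} = 0 := by
      have hie : IsEmpty {q : V × V // q ∈ bndSet G (comp G A p.2) ∧ q.2 ∈ A} := by
        refine ⟨fun q => ?_⟩
        obtain ⟨⟨hadj, h1, h2⟩, h3⟩ := q.2
        exact h2 (comp_closed h1 hadj h3)
      exact Nat.card_of_isEmpty
    have hvsplit := card_vertex_split (V := V) hCsub
    have hACnn := card_le_edge_add_comps (G.induce (A \ comp G A p.2))
    have hsurj2 : Function.Surjective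
        (fun q : {q : V × V // q ∈ bndSet G T ∧ q.2 ∈ A \ comp G A p.2} =>
          (G.induce (A \ comp G A p.2)).connectedComponentMk ⟨q.1.2, q.2.2⟩) := by
      refine SimpleGraph.ConnectedComponent.ind (fun x => ?_)
      obtain ⟨v, hv⟩ := x
      obtain ⟨q, hq, hq2⟩ := hF5 v hv.1
      have hsub2 : comp G A v ⊆ A \ comp G A p.2 := by
        intro w hw
        refine ⟨comp_subset hw, fun hwC => ?_⟩
        have e1 := comp_congr hw
        have e2 := comp_congr hwC
        have hvv : v ∈ comp G A v := mem_comp_self hv.1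
        rw [← e1, e2] at hvv
        exact hv.2 hvv
      have hrA := (mem_comp_iff hv.1 (comp_subset hq2)).mp hq2
      obtain ⟨w⟩ := hrA
      have hr2 := reachable_induce_of_support w
        (fun z hz => hsub2 (support_subset_comp w z hz)) hv (hsub2 hq2)
      exact ⟨⟨q, hq, hsub2 hq2⟩, SimpleGraph.ConnectedComponent.eq.mpr hr2.symm⟩
    have hcAC : Nat.card (G.induce (A \ comp G A p.2)).ConnectedComponent ≤
        Nat.card {q : V × V // q ∈ bndSet G T ∧ q.2 ∈ A \ comp G A p.2} :=
      Nat.card_le_card_of_surjective _ hsurj2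
    have hksplit : Nat.card {q : V × V // q ∈ bndSet G T} =
        Nat.card {q : V × V // q ∈ bndSet G T ∧ q.2 ∈ comp G A p.2} +
        Nat.card {q : V × V // q ∈ bndSet G T ∧ q.2 ∈ A \ comp G A p.2} := by
      have e1 : Nat.card {q : V × V // q ∈ bndSet G T} =
          Nat.card {x : {q : V × V // q ∈ bndSet G T} // x.1.2 ∈ comp G A p.2} +
          Nat.card {x : {q : V × V // q ∈ bndSet G T} // ¬ x.1.2 ∈ comp G A p.2} := by
        rw [← Nat.card_sum]
        exact Nat.card_congr (Equiv.sumCompl _).symm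
      rw [e1]
      congr 1
      · exact Nat.card_congr (Equiv.subtypeSubtypeEquivSubtypeInter
          (fun q : V × V => q ∈ bndSet G T) (fun q => q.2 ∈ comp G A p.2))
      · refine Nat.card_congr ((Equiv.subtypeSubtypeEquivSubtypeInter
          (fun q : V × V => q ∈ bndSet G T) (fun q => ¬ q.2 ∈ comp G A p.2)).trans
          (Equiv.subtypeEquivRight (fun q => ?_)))
        constructor
        · rintro ⟨hq, hnc⟩
          exact ⟨hq, hbnd2 q hq, hnc⟩
        · rintro ⟨hq, hin⟩
          exact ⟨hq, hin.2⟩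
    have hCex : excess (G.induce (comp G A p.2)) =
        (Nat.card (G.induce (comp G A p.2)).edgeSet : ℤ) -
          Nat.card ↥(comp G A p.2) + 1 := by
      unfold excess
      rw [card_comps_of_connected hCconn]
      push_cast
      ring
    rw [hCex]
    omega

end Aux

/-- grouping the boundary edges according to the connected component of
the annulus `B_R(o) \ 𝕋` containing their outer endpoint: at most `2ω` boundary edges
lie in classes of size at least two, and the component of the outer endpoint of a
boundary edge has excess at most `ω - (size of its class) + 1`. -/
theorem statement17 (d : ℕ) (hd : 3 ≤ d) (N : ℕ) (G : SimpleGraph (Fin N))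
    (hreg : IsRegular d G) (o : Fin N) (ℓ : ℕ) (hl : 1 ≤ ℓ) (R : ℝ)
    (hR : 2 * (ℓ : ℝ) ≤ R) (ω : ℕ)
    (hex : excess (G.induce (ball G {o} R)) ≤ (ω : ℤ)) :
    Nat.card {p : Fin N × Fin N //
        p ∈ bndSet G (ball G {o} (ℓ : ℝ)) ∧
          ∃ q : Fin N × Fin N, q ∈ bndSet G (ball G {o} (ℓ : ℝ)) ∧ q ≠ p ∧
            q.2 ∈ comp G (ball G {o} R \ ball G {o} (ℓ : ℝ)) p.2} ≤ 2 * ω ∧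
    ∀ p : Fin N × Fin N, p ∈ bndSet G (ball G {o} (ℓ : ℝ)) →
      excess (G.induce (comp G (ball G {o} R \ ball G {o} (ℓ : ℝ)) p.2)) +
          (Nat.card {q : Fin N × Fin N //
              q ∈ bndSet G (ball G {o} (ℓ : ℝ)) ∧
                q.2 ∈ comp G (ball G {o} R \ ball G {o} (ℓ : ℝ)) p.2} : ℤ)
        ≤ (ω : ℤ) + 1 := by
  classical
  have hl1 : (1 : ℝ) ≤ (ℓ : ℝ) := by exact_mod_cast hl
  have h0ℓ : (0 : ℝ) ≤ (ℓ : ℝ) := by linarith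
  have hℓR : (ℓ : ℝ) ≤ R := by linarith
  have h0R : (0 : ℝ) ≤ R := by linarith
  have hℓ1R : (ℓ : ℝ) + 1 ≤ R := by linarith
  have hTB : ball G {o} (ℓ : ℝ) ⊆ ball G {o} R := ball_mono hℓR
  have hbnd2 : ∀ p : Fin N × Fin N, p ∈ bndSet G (ball G {o} (ℓ : ℝ)) →
      p.2 ∈ ball G {o} R \ ball G {o} (ℓ : ℝ) := by
    rintro p ⟨hadj, h1, h2⟩
    exact ⟨ball_mono hℓ1R (mem_ball_succ h1 hadj), h2⟩
  have hF5 : ∀ v ∈ ball G {o} R \ ball G {o} (ℓ : ℝ),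
      ∃ q : Fin N × Fin N, q ∈ bndSet G (ball G {o} (ℓ : ℝ)) ∧
        q.2 ∈ comp G (ball G {o} R \ ball G {o} (ℓ : ℝ)) v := by
    rintro v ⟨hvB, hvT⟩
    obtain ⟨o', ho', w, hw⟩ := hvB
    have hsupp : ∀ z ∈ w.reverse.support, z ∈ ball G {o} R := by
      intro z hz
      rw [SimpleGraph.Walk.support_reverse, List.mem_reverse] at hz
      refine ⟨o', ho', w.takeUntil z hz, ?_⟩
      calc ((w.takeUntil z hz).length : ℝ) ≤ (w.length : ℝ) := by
            exact_mod_cast SimpleGraph.Walk.length_takeUntil_le w hz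
        _ ≤ R := hw
    have hoT : o' ∈ ball G {o} (ℓ : ℝ) := ⟨o', ho', SimpleGraph.Walk.nil, by simpa using h0ℓ⟩
    exact exists_bnd w.reverse hoT hsupp hvT
  exact main_aux G (ball G {o} (ℓ : ℝ)) (ball G {o} R) hTB
    (ball_connected h0ℓ) (ball_connected h0R) hbnd2 hF5 ω hex

end Paper
end
end
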